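/- arXiv:1411.2071 — 3 statements merged into one kernel-verified Lean document; each statement's English description precedes it below -/
import Mathlib

section
/- Let p be a prime with p ≠ 11, and let E be the elliptic curve y² + y = x³ − x² − 10x − 20 over F_p (the curve X₀(11), which is nonsingular for p ≠ 11 since its discriminant is −11⁵). Then 5 divides #E(F_p) = 1 + #{(x,y) ∈ F_p × F_p : y² + y = x³ − x² − 10x − 20}. -/
open WeierstrassCurve.Affine WeierstrassCurve.Affine.Point

/-- The curve `X₀(11) : y² + y = x³ - x² - 10x - 20`. -/
@[simps]
def W11 (F : Type*) [CommRing F] : WeierstrassCurve.Affine F :=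
  { a₁ := 0, a₂ := -1, a₃ := 1, a₄ := -10, a₆ := -20 }

lemma W11_eqn_iff {F : Type*} [CommRing F] (x y : F) :
    (W11 F).Equation x y ↔ y ^ 2 + y = x ^ 3 - x ^ 2 - 10 * x - 20 := by
  rw [WeierstrassCurve.Affine.equation_iff]
  simp only [W11_a₁, W11_a₂, W11_a₃, W11_a₄, W11_a₆]
  constructor <;> intro h <;> linear_combination h

lemma W11_Δ (F : Type*) [CommRing F] : (W11 F).Δ = -161051 := by
  simp [WeierstrassCurve.Δ, WeierstrassCurve.b₂, WeierstrassCurve.b₄,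
    WeierstrassCurve.b₆, WeierstrassCurve.b₈, W11]
  norm_num

lemma WeierstrassCurve.nonsingular_of_Δ_ne_zero {F : Type*} [Field F] (W : WeierstrassCurve F)
    {x y : F} (h : WeierstrassCurve.Affine.Equation W x y) (hΔ : W.Δ ≠ 0) :
    WeierstrassCurve.Affine.Nonsingular W x y :=
  (WeierstrassCurve.Affine.equation_iff_nonsingular_of_Δ_ne_zero (W := W) hΔ).mp h

lemma point_congr {F : Type*} [Field F] {W : WeierstrassCurve.Affine F}
    {x₁ y₁ x₂ y₂ : F} (h₁ : W.Nonsingular x₁ y₁) (h₂ : W.Nonsingular x₂ y₂)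
    (hx : x₁ = x₂) (hy : y₁ = y₂) : Point.some _ _ h₁ = Point.some _ _ h₂ := by
  subst hx; subst hy; rfl

/-- For every prime `p ≠ 11`, the elliptic curve
`X₀(11) : y² + y = x³ - x² - 10x - 20` over `F_p` satisfies `5 ∣ #E(F_p)`,
where `#E(F_p)` is `1` plus the number of affine solutions. -/
theorem stmt10 (p : ℕ) [Fact p.Prime] (hp : p ≠ 11) :
    5 ∣ (1 + Nat.card {pt : ZMod p × ZMod p //
      pt.2 ^ 2 + pt.2 = pt.1 ^ 3 - pt.1 ^ 2 - 10 * pt.1 - 20}) := by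
  haveI : NeZero p := ⟨(Fact.out : p.Prime).ne_zero⟩
  -- 11 is invertible
  have h11 : (11 : ZMod p) ≠ 0 := by
    intro h
    rw [show ((11 : ZMod p)) = ((11 : ℕ) : ZMod p) by norm_num,
      ZMod.natCast_eq_zero_iff] at h
    exact hp ((Nat.prime_dvd_prime_iff_eq Fact.out (by norm_num)).mp h)
  have hΔ : (W11 (ZMod p)).Δ ≠ 0 := by
    rw [W11_Δ]
    intro h
    apply h11
    have h' : (11 : ZMod p) ^ 5 = 0 := by linear_combination -h
    exact pow_eq_zero_iff (n := 5) (by norm_num) |>.mp h'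
  -- the three points
  have hP : (W11 (ZMod p)).Nonsingular 5 5 :=
    (W11 (ZMod p)).nonsingular_of_Δ_ne_zero ((W11_eqn_iff (5 : ZMod p) 5).mpr (by norm_num)) hΔ
  have hQ : (W11 (ZMod p)).Nonsingular 16 (-61) :=
    (W11 (ZMod p)).nonsingular_of_Δ_ne_zero ((W11_eqn_iff (16 : ZMod p) (-61)).mpr (by norm_num)) hΔ
  have hR : (W11 (ZMod p)).Nonsingular 5 (-6) :=
    (W11 (ZMod p)).nonsingular_of_Δ_ne_zero ((W11_eqn_iff (5 : ZMod p) (-6)).mpr (by norm_num)) hΔ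
  -- negY values
  have hnegP : (W11 (ZMod p)).negY 5 5 = -6 := by simp [W11, negY]; norm_num
  have hnegQ : (W11 (ZMod p)).negY 16 (-61) = 60 := by simp [W11, negY]; norm_num
  -- doubling of P
  have hyP : (5 : ZMod p) ≠ (W11 (ZMod p)).negY 5 5 := by
    rw [hnegP]; intro h; exact h11 (by linear_combination h)
  have hLP : (W11 (ZMod p)).slope 5 5 5 5 = 5 := by
    rw [slope_of_Y_ne rfl hyP, hnegP, div_eq_iff (by rw [hnegP] at hyP; exact sub_ne_zero.mpr hyP)]
    simp [W11]
    norm_num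
  have hxP : (W11 (ZMod p)).addX 5 5 ((W11 (ZMod p)).slope 5 5 5 5) = 16 := by
    rw [hLP]; simp [W11, addX]; norm_num
  have hyP' : (W11 (ZMod p)).addY 5 5 5 ((W11 (ZMod p)).slope 5 5 5 5) = -61 := by
    rw [addY, negAddY, hxP, hLP]; simp [W11, negY]; norm_num
  have e1 : Point.some _ _ hP + Point.some _ _ hP = Point.some _ _ hQ :=
    (add_of_Y_ne hyP).trans (point_congr _ hQ hxP hyP')
  -- doubling of Q
  have hyQ : (-61 : ZMod p) ≠ (W11 (ZMod p)).negY 16 (-61) := by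
    rw [hnegQ]; intro h
    exact h11 (mul_self_eq_zero.mp (by linear_combination -h) : (11 : ZMod p) = 0)
  have hLQ : (W11 (ZMod p)).slope 16 16 (-61) (-61) = -6 := by
    rw [slope_of_Y_ne rfl hyQ, hnegQ,
      div_eq_iff (by rw [hnegQ] at hyQ; exact sub_ne_zero.mpr hyQ)]
    simp [W11]
    norm_num
  have hxQ : (W11 (ZMod p)).addX 16 16 ((W11 (ZMod p)).slope 16 16 (-61) (-61)) = 5 := by
    rw [hLQ]; simp [W11, addX]; norm_num
  have hyQ' : (W11 (ZMod p)).addY 16 16 (-61) ((W11 (ZMod p)).slope 16 16 (-61) (-61)) = -6 := by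
    rw [addY, negAddY, hxQ, hLQ]; simp [W11, negY]; norm_num
  have e2 : Point.some _ _ hQ + Point.some _ _ hQ = Point.some _ _ hR :=
    (add_of_Y_ne hyQ).trans (point_congr _ hR hxQ hyQ')
  -- R + P = 0
  have e3 : Point.some _ _ hR + Point.some _ _ hP = 0 :=
    add_of_Y_eq rfl hnegP.symm
  -- 5 • P = 0
  have h5 : (5 : ℕ) • Point.some _ _ hP = 0 := by
    rw [show (5 : ℕ) • Point.some _ _ hP =
      (Point.some _ _ hP + Point.some _ _ hP) + (Point.some _ _ hP + Point.some _ _ hP) + Point.some _ _ hP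
      from by abel, e1, e2, e3]
  have hord : addOrderOf (Point.some _ _ hP) = 5 := by
    have hdvd : addOrderOf (Point.some _ _ hP) ∣ 5 := addOrderOf_dvd_of_nsmul_eq_zero h5
    rcases (Nat.prime_five.eq_one_or_self_of_dvd _ hdvd) with h | h
    · exact absurd (AddMonoid.addOrderOf_eq_one_iff.mp h) (some_ne_zero hP)
    · exact h
  have hcard : (5 : ℕ) ∣ Nat.card (W11 (ZMod p)).Point := hord ▸ addOrderOf_dvd_natCard _
  -- identify cardinalities
  set S := {pt : ZMod p × ZMod p //
      pt.2 ^ 2 + pt.2 = pt.1 ^ 3 - pt.1 ^ 2 - 10 * pt.1 - 20} with hS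
  have e : (W11 (ZMod p)).Point ≃ Option S :=
    { toFun := fun P => match P with
        | .zero => Option.none
        | @Point.some _ _ _ x y h => Option.some ⟨(x, y), (W11_eqn_iff x y).mp h.1⟩
      invFun := fun o => match o with
        | Option.none => 0
        | Option.some q =>
            Point.some q.1.1 q.1.2 ((W11 (ZMod p)).nonsingular_of_Δ_ne_zero
              ((W11_eqn_iff q.1.1 q.1.2).mpr q.2) hΔ)
      left_inv := by rintro (_ | _) <;> rfl
      right_inv := by rintro (_ | ⟨⟨x, y⟩, h⟩) <;> rfl }
  haveI : Finite S := Subtype.finite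
  have hc : Nat.card (W11 (ZMod p)).Point = 1 + Nat.card S := by
    rw [Nat.card_congr e, Finite.card_option, add_comm]
  rw [← hc]
  exact hcard
end

section
/- Let E be the elliptic curve y² + y = x³ − x² − 10x − 20 (the curve X₀(11)). For every prime p ≠ 11 with p not congruent to 1 or 4 modulo 5 (i.e., p inert or ramified in ℚ(√5)), one has #E(F_p) ≠ p + 1; that is, no such prime is supersingular in the sense of having trace of Frobenius zero. -/
open WeierstrassCurve WeierstrassCurve.Affine

/-- The curve X₀(11) over `ZMod p`. -/
noncomputable def X11 (p : ℕ) : WeierstrassCurve.Affine (ZMod p) :=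
  { a₁ := 0, a₂ := -1, a₃ := 1, a₄ := -10, a₆ := -20 }

lemma X11.some_eq_some {p : ℕ} [Fact p.Prime] {x₁ y₁ x₂ y₂ : ZMod p}
    (h₁ : (X11 p).Nonsingular x₁ y₁) (h₂ : (X11 p).Nonsingular x₂ y₂)
    (hx : x₁ = x₂) (hy : y₁ = y₂) : Point.some _ _ h₁ = Point.some _ _ h₂ := by
  subst hx; subst hy; rfl

lemma X11.eleven_ne_zero {p : ℕ} [hFp : Fact p.Prime] (hp : p ≠ 11) :
    (11 : ZMod p) ≠ 0 := by
  intro h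
  rw [show ((11 : ZMod p)) = ((11 : ℕ) : ZMod p) by norm_num,
    ZMod.natCast_eq_zero_iff] at h
  exact hp ((Nat.prime_dvd_prime_iff_eq hFp.out (by norm_num)).mp h)

lemma X11.Δ_ne_zero {p : ℕ} [hFp : Fact p.Prime] (hp : p ≠ 11) :
    (X11 p).Δ ≠ 0 := by
  have h11 := X11.eleven_ne_zero (p := p) hp
  have : (X11 p).Δ = -(11 : ZMod p) ^ 5 := by
    simp only [X11, WeierstrassCurve.Δ, WeierstrassCurve.b₂, WeierstrassCurve.b₄,
      WeierstrassCurve.b₆, WeierstrassCurve.b₈]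
    ring
  rw [this]
  simpa using pow_ne_zero 5 h11

/-- For the elliptic curve `X₀(11) : y² + y = x³ - x² - 10x - 20`
and every prime `p ≠ 11` with `p` not congruent to `1` or `4` mod `5` (i.e. `p`
inert or ramified in `ℚ(√5)`), one has `#E(F_p) ≠ p + 1`; that is, no such
prime is supersingular in the sense of having trace of Frobenius zero. -/
theorem stmt11 (p : ℕ) [Fact p.Prime] (hp : p ≠ 11)
    (h1 : p % 5 ≠ 1) (h4 : p % 5 ≠ 4) :
    (1 + Nat.card {pt : ZMod p × ZMod p //
      pt.2 ^ 2 + pt.2 = pt.1 ^ 3 - pt.1 ^ 2 - 10 * pt.1 - 20}) ≠ p + 1 := by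
  have h11 := X11.eleven_ne_zero (p := p) hp
  have hΔ := X11.Δ_ne_zero (p := p) hp
  set W := X11 p with hW
  -- the three points
  have hPe : W.Equation 5 5 := by
    rw [equation_iff]; show (5:ZMod p)^2 + 0*5*5 + 1*5 = 5^3 + (-1)*5^2 + (-10)*5 + (-20); ring
  have hP : W.Nonsingular 5 5 := (W.equation_iff_nonsingular_of_Δ_ne_zero hΔ).mp hPe
  have hQe : W.Equation 16 (-61) := by
    rw [equation_iff]
    show ((-61:ZMod p))^2 + 0*16*(-61) + 1*(-61) = 16^3 + (-1)*16^2 + (-10)*16 + (-20); ring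
  have hQ : W.Nonsingular 16 (-61) := (W.equation_iff_nonsingular_of_Δ_ne_zero hΔ).mp hQe
  have hRe : W.Equation 5 (-6) := by
    rw [equation_iff]
    show ((-6:ZMod p))^2 + 0*5*(-6) + 1*(-6) = 5^3 + (-1)*5^2 + (-10)*5 + (-20); ring
  have hR : W.Nonsingular 5 (-6) := (W.equation_iff_nonsingular_of_Δ_ne_zero hΔ).mp hRe
  -- negY values
  have hnegP : W.negY 5 5 = -6 := by show -(5:ZMod p) - 0*5 - 1 = -6; ring
  have hnegQ : W.negY 16 (-61) = 60 := by show -(-61:ZMod p) - 0*16 - 1 = 60; ring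
  -- y ≠ negY facts
  have hyP : (5 : ZMod p) ≠ W.negY 5 5 := by
    rw [hnegP]; intro h
    apply h11; linear_combination h
  have hyQ : (-61 : ZMod p) ≠ W.negY 16 (-61) := by
    rw [hnegQ]; intro h
    apply mul_ne_zero h11 h11; linear_combination -h
  -- slopes
  have hsP : W.slope 5 5 5 5 = 5 := by
    rw [slope_of_Y_ne rfl hyP, hnegP]
    show ((3*5^2 + 2*(-1)*5 + (-10) - 0*5) : ZMod p) / (5 - (-6)) = 5
    rw [show ((3*5^2 + 2*(-1)*5 + (-10) - 0*5) : ZMod p) = 5 * 11 by ring,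
      show ((5:ZMod p) - (-6)) = 11 by ring, mul_div_assoc, div_self h11, mul_one]
  have hsQ : W.slope 16 16 (-61) (-61) = -6 := by
    rw [slope_of_Y_ne rfl hyQ, hnegQ]
    show ((3*16^2 + 2*(-1)*16 + (-10) - 0*(-61)) : ZMod p) / ((-61) - 60) = -6
    rw [show ((3*16^2 + 2*(-1)*16 + (-10) - 0*(-61)) : ZMod p) = (-6) * (-121) by ring,
      show ((-61:ZMod p) - 60) = -121 by ring, mul_div_assoc, div_self (by
        intro h; apply mul_ne_zero h11 h11; linear_combination -h), mul_one]
  -- P + P = Q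
  have hPP : Point.some _ _ hP + Point.some _ _ hP = Point.some _ _ hQ := by
    rw [Point.add_self_of_Y_ne hyP]
    refine X11.some_eq_some _ _ ?_ ?_
    · rw [hsP]; show (5:ZMod p)^2 + 0*5 - (-1) - 5 - 5 = 16; ring
    · rw [addY, negAddY, hsP, addX]
      show -((5:ZMod p) * ((5^2 + 0*5 - (-1) - 5 - 5) - 5) + 5) - 0*_ - 1 = -61
      ring
  -- Q + Q = R
  have hQQ : Point.some _ _ hQ + Point.some _ _ hQ = Point.some _ _ hR := by
    rw [Point.add_self_of_Y_ne hyQ]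
    refine X11.some_eq_some _ _ ?_ ?_
    · rw [hsQ]; show (-6:ZMod p)^2 + 0*(-6) - (-1) - 16 - 16 = 5; ring
    · rw [addY, negAddY, hsQ, addX]
      show -((-6:ZMod p) * (((-6)^2 + 0*(-6) - (-1) - 16 - 16) - 16) + (-61)) - 0*_ - 1 = -6
      ring
  -- R + P = 0
  have hRP : Point.some _ _ hR + Point.some _ _ hP = 0 := Point.add_of_Y_eq rfl (by rw [hnegP])
  -- 5 • P = 0
  have h5P : (5 : ℕ) • Point.some _ _ hP = 0 := by
    rw [show (5:ℕ) = 2 + 2 + 1 by rfl, add_nsmul, add_nsmul, one_nsmul, two_nsmul,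
      hPP, hQQ, hRP]
  -- order of P is 5
  haveI : Fact (Nat.Prime 5) := ⟨by norm_num⟩
  have hord : addOrderOf (Point.some _ _ hP) = 5 :=
    addOrderOf_eq_prime h5P (Point.some_ne_zero hP)
  -- card
  haveI : NeZero p := ⟨(Fact.out : p.Prime).ne_zero⟩
  haveI hfin : Finite {pt : ZMod p × ZMod p // W.Nonsingular pt.1 pt.2} := by
    infer_instance
  haveI : Fintype {pt : ZMod p × ZMod p // W.Nonsingular pt.1 pt.2} := Fintype.ofFinite _
  let e : W.Point ≃ Option {pt : ZMod p × ZMod p // W.Nonsingular pt.1 pt.2} :=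
    { toFun := fun P => match P with
        | Point.zero => none
        | @Point.some _ _ _ x y h => Option.some ⟨(x, y), h⟩
      invFun := fun o => match o with
        | none => Point.zero
        | Option.some ⟨(x, y), h⟩ => Point.some _ _ h
      left_inv := by rintro (_ | _) <;> rfl
      right_inv := by rintro (_ | ⟨⟨x, y⟩, h⟩) <;> rfl }
  haveI : Finite W.Point := Finite.of_equiv _ e.symm
  have hdvd : 5 ∣ Nat.card W.Point := hord ▸ addOrderOf_dvd_natCard (Point.some _ _ hP)
  have hcard : Nat.card W.Point =
      1 + Nat.card {pt : ZMod p × ZMod p //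
        pt.2 ^ 2 + pt.2 = pt.1 ^ 3 - pt.1 ^ 2 - 10 * pt.1 - 20} := by
    rw [Nat.card_congr e]
    haveI : Fintype {pt : ZMod p × ZMod p // W.Nonsingular pt.1 pt.2} := Fintype.ofFinite _
    rw [Nat.card_eq_fintype_card, Fintype.card_option, ← Nat.card_eq_fintype_card]
    rw [Nat.card_congr (Equiv.subtypeEquivRight (q := fun pt : ZMod p × ZMod p =>
      pt.2 ^ 2 + pt.2 = pt.1 ^ 3 - pt.1 ^ 2 - 10 * pt.1 - 20) ?_)]
    · omega
    · intro pt
      constructor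
      · intro h
        have h' := h.1
        rw [equation_iff] at h'
        have h'' : pt.2 ^ 2 + 0 * pt.1 * pt.2 + 1 * pt.2
            = pt.1 ^ 3 + (-1) * pt.1 ^ 2 + (-10) * pt.1 + (-20) := h'
        linear_combination h''
      · intro h
        refine (W.equation_iff_nonsingular_of_Δ_ne_zero hΔ).mp ?_
        rw [equation_iff]
        show pt.2 ^ 2 + 0 * pt.1 * pt.2 + 1 * pt.2
            = pt.1 ^ 3 + (-1) * pt.1 ^ 2 + (-10) * pt.1 + (-20)
        linear_combination h
  rw [hcard] at hdvd
  intro hcontra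
  rw [hcontra] at hdvd
  omega
end

section
/- Let (D,q) be a good pair and let t ≤ t′ be real numbers. If every complex zero of x ↦ Ξ_t(x, χ_D) is real, then every complex zero of x ↦ Ξ_{t′}(x, χ_D) is real. (Consequently there is a well-defined De Bruijn–Newman constant Λ_D ∈ [−∞, ∞) such that Ξ_t has only real zeros precisely when t ≥ Λ_D.) -/
open Polynomial

noncomputable section

variable {F : Type} [Field F] [Fintype F]

/-- Kronecker symbol of `D` at a monic irreducible `g`:
`0` if `g ∣ D`, `1` if `D` is a nonzero square mod `g`, `-1` otherwise. -/
def kron (D g : F[X]) : ℤ := by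
  classical exact
    if g ∣ D then 0 else if ∃ h : F[X], g ∣ (h ^ 2 - D) then 1 else -1

/-- `χ_D(f)`: the Kronecker symbol extended multiplicatively over the monic
irreducible factors of `f`, counted with multiplicity; `χ_D(1) = 1`.
(Each irreducible factor is rescaled to be monic.) -/
def chi (D f : F[X]) : ℤ :=
  ((UniqueFactorizationMonoid.factors f).map
    (fun g => kron D (C (g.leadingCoeff)⁻¹ * g))).prod

/-- `c_n(D) = Σ_{f monic, deg f = n} χ_D(f)`; monic polynomials of degree `n`
are parametrized by their lower-order coefficients. -/
def lCoeff (D : F[X]) (n : ℕ) : ℤ :=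
  ∑ v : Fin n → F, chi D (X ^ n + ∑ i : Fin n, C (v i) * X ^ (i : ℕ))

/-- The deformed `L`-function `Ξ_t(x, χ_D)`, with `g = (deg D - 1)/2`. -/
def Xi (D : F[X]) (t : ℝ) (x : ℂ) : ℂ :=
  (lCoeff D ((D.natDegree - 1) / 2) : ℂ) +
    ∑ n ∈ Finset.Icc 1 ((D.natDegree - 1) / 2),
      (lCoeff D ((D.natDegree - 1) / 2 - n) : ℂ) *
        ((Real.sqrt (Fintype.card F) ^ n * Real.exp (t * n ^ 2) : ℝ) : ℂ) *
        (Complex.exp (n * Complex.I * x) + Complex.exp (-(n * Complex.I * x)))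

/-- `(D, q)` is a good pair: `q` odd, `D` monic, squarefree, of odd degree `≥ 3`. -/
def GoodPair (D : F[X]) : Prop :=
  Odd (Fintype.card F) ∧ D.Monic ∧ Squarefree D ∧ Odd D.natDegree ∧ 3 ≤ D.natDegree

end


open Filter Topology

noncomputable def Complex.abs : AbsoluteValue ℂ ℝ where
  toFun := norm
  map_mul' := norm_mul
  nonneg' := norm_nonneg
  eq_zero' _ := norm_eq_zero
  add_le' := norm_add_le

lemma Complex.abs_apply (z : ℂ) : Complex.abs z = ‖z‖ := rfl

lemma Complex.sq_abs (z : ℂ) : Complex.abs z ^ 2 = Complex.normSq z := Complex.sq_norm z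

lemma Complex.normSq_eq_abs (z : ℂ) : Complex.normSq z = Complex.abs z ^ 2 :=
  Complex.normSq_eq_norm_sq z

lemma Complex.abs_ofReal (r : ℝ) : Complex.abs (r : ℂ) = |r| := Complex.norm_real r

lemma Complex.continuous_abs : Continuous Complex.abs := continuous_norm

lemma Complex.abs_exp (z : ℂ) : Complex.abs (Complex.exp z) = Real.exp z.re := Complex.norm_exp z

lemma one_add_half_sq_le_cosh (x : ℝ) : 1 + x^2/2 ≤ Real.cosh x := by
  have h := Real.hasSum_cosh x
  have h2 : ∑ n ∈ Finset.range 2, x ^ (2*n) / ((2*n).factorial : ℝ) ≤ Real.cosh x :=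
    sum_le_hasSum _ (fun i _ => div_nonneg ((even_two_mul i).pow_nonneg x) (Nat.cast_nonneg _)) h
  simpa [Finset.sum_range_succ] using h2

lemma cosh_pow_tendsto (s : ℝ) (hs : 0 ≤ s) (n : ℕ) :
    Tendsto (fun m : ℕ => Real.cosh ((n : ℝ) * (Real.sqrt (2*s) / Real.sqrt m)) ^ m)
      atTop (𝓝 (Real.exp (s * (n:ℝ)^2))) := by
  have key : ∀ m : ℕ, 1 ≤ m → ((n:ℝ) * (Real.sqrt (2*s) / Real.sqrt m))^2 = 2 * (s * n^2) / m := by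
    intro m hm
    have hm0 : (0:ℝ) < m := by exact_mod_cast hm
    rw [mul_pow, div_pow, Real.sq_sqrt (by linarith), Real.sq_sqrt hm0.le]
    ring
  have hub : ∀ m : ℕ, 1 ≤ m →
      Real.cosh ((n : ℝ) * (Real.sqrt (2*s) / Real.sqrt m)) ^ m ≤ Real.exp (s * (n:ℝ)^2) := by
    intro m hm
    have hm0 : (0:ℝ) < m := by exact_mod_cast hm
    calc Real.cosh ((n : ℝ) * (Real.sqrt (2*s) / Real.sqrt m)) ^ m
        ≤ Real.exp (((n : ℝ) * (Real.sqrt (2*s) / Real.sqrt m))^2 / 2) ^ m :=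
          pow_le_pow_left₀ (Real.cosh_pos _).le (Real.cosh_le_exp_half_sq _) m
      _ = Real.exp (s * (n:ℝ)^2) := by
          rw [← Real.exp_nat_mul, key m hm]
          congr 1
          field_simp
  have hlb : ∀ m : ℕ, 1 ≤ m →
      (1 + (s * (n:ℝ)^2) / m) ^ m ≤ Real.cosh ((n : ℝ) * (Real.sqrt (2*s) / Real.sqrt m)) ^ m := by
    intro m hm
    have hm0 : (0:ℝ) < m := by exact_mod_cast hm
    have h1 : (0:ℝ) ≤ 1 + (s * (n:ℝ)^2) / m := by positivity
    refine pow_le_pow_left₀ h1 ?_ m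
    calc 1 + (s * (n:ℝ)^2) / m
        = 1 + ((n : ℝ) * (Real.sqrt (2*s) / Real.sqrt m))^2 / 2 := by rw [key m hm]; ring
      _ ≤ _ := one_add_half_sq_le_cosh _
  refine tendsto_of_tendsto_of_tendsto_of_le_of_le'
    (Real.tendsto_one_add_div_pow_exp (s * (n:ℝ)^2)) tendsto_const_nhds ?_ ?_
  · exact eventually_atTop.2 ⟨1, hlb⟩
  · exact eventually_atTop.2 ⟨1, hub⟩

lemma multiset_prod_lt {s : Multiset ℂ} (hs : s ≠ 0) {f h : ℂ → ℝ}
    (h0 : ∀ ζ ∈ s, 0 ≤ f ζ) (hlt : ∀ ζ ∈ s, f ζ < h ζ) :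
    (s.map f).prod < (s.map h).prod := by
  induction s using Multiset.induction with
  | empty => exact absurd rfl hs
  | cons a s ih =>
    rcases eq_or_ne s 0 with rfl | hs0
    · simpa using hlt a (by simp)
    · have hfa := h0 a (by simp)
      have hfs : (0:ℝ) ≤ (s.map f).prod := by
        refine Multiset.prod_nonneg ?_
        intro x hx
        obtain ⟨ζ, hζ, rfl⟩ := Multiset.mem_map.1 hx
        exact h0 ζ (by simp [hζ])
      have := ih hs0 (fun ζ hζ => h0 ζ (by simp [hζ])) (fun ζ hζ => hlt ζ (by simp [hζ]))
      simp only [Multiset.map_cons, Multiset.prod_cons]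
      exact mul_lt_mul'' (hlt a (by simp)) this hfa hfs

noncomputable def TT (g : ℕ) (b u : ℕ → ℝ) : ℂ[X] :=
  ∑ k ∈ Finset.range (2*g+1), C ((b (Nat.dist k g) * u (Nat.dist k g) : ℝ) : ℂ) * X ^ k

lemma eval_TT (g : ℕ) (b u : ℕ → ℝ) (z : ℂ) :
    eval z (TT g b u) = ∑ k ∈ Finset.range (2*g+1),
      ((b (Nat.dist k g) * u (Nat.dist k g) : ℝ) : ℂ) * z ^ k := by
  simp [TT, eval_finset_sum]

lemma coeff_TT (g : ℕ) (b u : ℕ → ℝ) (j : ℕ) (hj : j < 2*g+1) :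
    (TT g b u).coeff j = ((b (Nat.dist j g) * u (Nat.dist j g) : ℝ) : ℂ) := by
  rw [TT, finset_sum_coeff]
  simp only [coeff_C_mul, coeff_X_pow, mul_ite, mul_one, mul_zero]
  rw [Finset.sum_ite_eq (Finset.range (2*g+1))]
  simp [hj]

lemma dist_two_mul (g : ℕ) : Nat.dist (2*g) g = g := by simp [Nat.dist]; omega

lemma natDegree_TT_le (g : ℕ) (b u : ℕ → ℝ) : (TT g b u).natDegree ≤ 2*g := by
  refine natDegree_sum_le_of_forall_le _ _ (fun k hk => ?_)
  exact le_trans (natDegree_C_mul_X_pow_le _ _) (by simpa [Nat.lt_succ_iff] using hk)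

lemma natDegree_TT (g : ℕ) (b u : ℕ → ℝ) (hlc : b g * u g ≠ 0) :
    (TT g b u).natDegree = 2*g := by
  refine le_antisymm (natDegree_TT_le g b u) (le_natDegree_of_ne_zero ?_)
  rw [coeff_TT g b u (2*g) (by omega), dist_two_mul]
  exact_mod_cast hlc

lemma leadingCoeff_TT (g : ℕ) (b u : ℕ → ℝ) (hlc : b g * u g ≠ 0) :
    (TT g b u).leadingCoeff = ((b g * u g : ℝ) : ℂ) := by
  rw [leadingCoeff, natDegree_TT g b u hlc, coeff_TT g b u (2*g) (by omega), dist_two_mul]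

lemma TT_ne_zero (g : ℕ) (b u : ℕ → ℝ) (hlc : b g * u g ≠ 0) : TT g b u ≠ 0 := by
  intro h
  have := leadingCoeff_TT g b u hlc
  rw [h] at this
  simp at this
  rcases this with h1 | h1 <;> exact hlc (by rw [h1]; ring)

lemma card_roots_TT (g : ℕ) (b u : ℕ → ℝ) (hlc : b g * u g ≠ 0) :
    (TT g b u).roots.card = 2*g := by
  rw [← natDegree_TT g b u hlc]
  exact splits_iff_card_roots.1 (IsAlgClosed.splits _)

lemma abs_eval_eq (p : ℂ[X]) (z : ℂ) :
    Complex.abs (eval z p) =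
      Complex.abs p.leadingCoeff * (p.roots.map (fun ζ => Complex.abs (z - ζ))).prod := by
  conv_lhs => rw [(IsAlgClosed.splits p).eq_prod_roots]
  rw [eval_mul, eval_C, map_mul, eval_multiset_prod, Multiset.map_map,
    map_multiset_prod Complex.abs, Multiset.map_map]
  simp [Function.comp]

lemma cosh_dist_eq (g k : ℕ) (a : ℝ) :
    Real.cosh ((Nat.dist k g : ℝ) * a)
      = (Real.exp ((g:ℝ)*a) * Real.exp (-a) ^ k + Real.exp (-((g:ℝ)*a)) * Real.exp a ^ k) / 2 := by
  rw [← Real.exp_nat_mul, ← Real.exp_nat_mul, ← Real.exp_add, ← Real.exp_add, Real.cosh_eq]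
  rcases le_total k g with h | h
  · rw [Nat.dist_eq_sub_of_le h]
    have : ((g - k : ℕ) : ℝ) = (g : ℝ) - k := by push_cast [h]; ring
    rw [this]; congr 1; congr 1 <;> ring
  · rw [Nat.dist_eq_sub_of_le_right h]
    have : ((k - g : ℕ) : ℝ) = (k : ℝ) - (g:ℝ) := by push_cast [h]; ring
    rw [this, add_comm (Real.exp (((g:ℝ))*a + (k:ℝ)*(-a)))]
    congr 1; congr 1 <;> ring

lemma eval_TT_cosh (g : ℕ) (b u : ℕ → ℝ) (a : ℝ) (z : ℂ) :
    eval z (TT g b (fun n => u n * Real.cosh ((n:ℝ) * a))) =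
      ((Real.exp ((g:ℝ)*a) : ℝ) * eval (((Real.exp (-a) : ℝ) : ℂ) * z) (TT g b u)
        + ((Real.exp (-((g:ℝ)*a)) : ℝ) : ℂ) * eval (((Real.exp a : ℝ) : ℂ) * z) (TT g b u)) / 2 := by
  rw [eval_TT, eval_TT, eval_TT, Finset.mul_sum, Finset.mul_sum, ← Finset.sum_add_distrib,
    Finset.sum_div]
  refine Finset.sum_congr rfl (fun k _ => ?_)
  have hr : b (Nat.dist k g) * (u (Nat.dist k g) * Real.cosh ((Nat.dist k g : ℝ) * a))
      = (Real.exp ((g:ℝ)*a) * (b (Nat.dist k g) * u (Nat.dist k g)) * Real.exp (-a) ^ k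
        + Real.exp (-((g:ℝ)*a)) * (b (Nat.dist k g) * u (Nat.dist k g)) * Real.exp a ^ k) / 2 := by
    rw [cosh_dist_eq g k a]; ring
  have : ((b (Nat.dist k g) * (u (Nat.dist k g) * Real.cosh ((Nat.dist k g : ℝ) * a)) : ℝ) : ℂ)
      = (((Real.exp ((g:ℝ)*a) * (b (Nat.dist k g) * u (Nat.dist k g)) * Real.exp (-a) ^ k
        + Real.exp (-((g:ℝ)*a)) * (b (Nat.dist k g) * u (Nat.dist k g)) * Real.exp a ^ k) / 2 : ℝ) : ℂ) := by
    exact_mod_cast congrArg (fun r : ℝ => (r : ℂ)) hr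
  rw [this]
  push_cast
  ring

lemma factor_ineq {z ζ : ℂ} (hζ : Complex.abs ζ = 1) {r : ℝ} (hr : 1 < r) :
    (Complex.abs (z - (r:ℂ)*ζ))^2 - (Complex.abs ((r:ℂ)*z - ζ))^2
      = ((Complex.abs z)^2 - 1) * (1 - r^2) := by
  rw [Complex.sq_abs, Complex.sq_abs, Complex.sq_abs z]
  rw [Complex.normSq_sub, Complex.normSq_sub]
  have h1 : Complex.normSq ((r:ℂ)*ζ) = r^2 := by
    rw [map_mul, Complex.normSq_ofReal, Complex.normSq_eq_abs, hζ]; ring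
  have h2 : Complex.normSq ((r:ℂ)*z) = r^2 * Complex.normSq z := by
    rw [map_mul, Complex.normSq_ofReal]; ring
  have h3 : (z * (starRingEnd ℂ) ((r:ℂ)*ζ)).re = r * (z * (starRingEnd ℂ) ζ).re := by
    rw [map_mul, Complex.conj_ofReal, show z * ((r:ℂ) * (starRingEnd ℂ) ζ)
      = (r:ℂ) * (z * (starRingEnd ℂ) ζ) by ring, Complex.re_ofReal_mul]
  have h4 : ((r:ℂ)*z * (starRingEnd ℂ) ζ).re = r * (z * (starRingEnd ℂ) ζ).re := by
    rw [show (r:ℂ) * z * (starRingEnd ℂ) ζ = (r:ℂ) * (z * (starRingEnd ℂ) ζ) by ring,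
      Complex.re_ofReal_mul]
  have h5 : Complex.normSq ζ = 1 := by rw [Complex.normSq_eq_abs, hζ]; ring
  rw [h1, h2, h3, h4, h5]
  ring

lemma step (g : ℕ) (hg : 1 ≤ g) (b u : ℕ → ℝ) (hlc : b g * u g ≠ 0) (a : ℝ) (ha : 0 ≤ a)
    (h : ∀ z : ℂ, eval z (TT g b u) = 0 → Complex.abs z = 1) :
    ∀ z : ℂ, eval z (TT g b (fun n => u n * Real.cosh ((n:ℝ) * a))) = 0 → Complex.abs z = 1 := by
  rcases eq_or_lt_of_le ha with rfl | hapos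
  · intro z hz
    apply h z
    rw [eval_TT] at hz ⊢
    simpa using hz
  intro z hz
  by_contra hza
  have hr : 1 < Real.exp a := by
    rw [← Real.exp_zero]; exact Real.exp_lt_exp.2 hapos
  set r : ℝ := Real.exp a with hrdef
  have hid := eval_TT_cosh g b u a z
  rw [hz] at hid
  have hsum : ((Real.exp ((g:ℝ)*a) : ℝ) : ℂ) * eval (((Real.exp (-a) : ℝ) : ℂ) * z) (TT g b u)
      + ((Real.exp (-((g:ℝ)*a)) : ℝ) : ℂ) * eval (((Real.exp a : ℝ) : ℂ) * z) (TT g b u) = 0 := by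
    exact (div_eq_zero_iff.mp hid.symm).resolve_right two_ne_zero
  -- take absolute values
  have habs : Real.exp ((g:ℝ)*a) * Complex.abs (eval (((Real.exp (-a):ℝ):ℂ) * z) (TT g b u))
      = Real.exp (-((g:ℝ)*a)) * Complex.abs (eval (((Real.exp a:ℝ):ℂ) * z) (TT g b u)) := by
    have heq : ((Real.exp ((g:ℝ)*a) : ℝ) : ℂ) * eval (((Real.exp (-a) : ℝ) : ℂ) * z) (TT g b u)
        = - (((Real.exp (-((g:ℝ)*a)) : ℝ) : ℂ) * eval (((Real.exp a : ℝ) : ℂ) * z) (TT g b u)) :=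
      eq_neg_of_add_eq_zero_left hsum
    have h3 := congrArg Complex.abs heq
    simp only [map_mul, Complex.abs.map_neg, Complex.abs_ofReal, Real.abs_exp] at h3
    exact h3
  -- expand via roots
  set p := TT g b u with hp
  have hp0 : p ≠ 0 := TT_ne_zero g b u hlc
  have hLC : Complex.abs p.leadingCoeff ≠ 0 := by
    simp [leadingCoeff_ne_zero.2 hp0]
  have hcirc : ∀ ζ ∈ p.roots, Complex.abs ζ = 1 := by
    intro ζ hζ
    exact h ζ ((mem_roots hp0).1 hζ)
  rw [abs_eval_eq, abs_eval_eq] at habs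
  -- cancel leading coefficient
  have habs2 : Real.exp ((g:ℝ)*a) * (p.roots.map
        (fun ζ => Complex.abs (((Real.exp (-a):ℝ):ℂ) * z - ζ))).prod
      = Real.exp (-((g:ℝ)*a)) * (p.roots.map
        (fun ζ => Complex.abs (((Real.exp a:ℝ):ℂ) * z - ζ))).prod := by
    refine mul_left_cancel₀ hLC ?_
    linear_combination habs
  set E := Real.exp a with hE
  have hEpos : 0 < E := Real.exp_pos a
  have hE1 : (1:ℝ) < E := hr
  -- rewrite exp(g*a) as E^g
  have hga : Real.exp ((g:ℝ)*a) = E^g := by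
    rw [hE, ← Real.exp_nat_mul]
  have hnga : Real.exp (-((g:ℝ)*a)) = (E^g)⁻¹ := by
    rw [Real.exp_neg, hga]
  rw [hga, hnga] at habs2
  set P1 := (p.roots.map (fun ζ => Complex.abs (((Real.exp (-a):ℝ):ℂ) * z - ζ))).prod with hP1
  set P2 := (p.roots.map (fun ζ => Complex.abs (((Real.exp a:ℝ):ℂ) * z - ζ))).prod with hP2
  have hEg : (0:ℝ) < E^g := by positivity
  have hmain : (p.roots.map (fun ζ => Complex.abs (z - (E:ℂ) * ζ))).prod = P2 := by
    have hmap : p.roots.map (fun ζ => Complex.abs (z - (E:ℂ) * ζ))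
        = p.roots.map (fun ζ => E * Complex.abs (((Real.exp (-a):ℝ):ℂ) * z - ζ)) := by
      refine Multiset.map_congr rfl (fun ζ _ => ?_)
      have hfac : (E:ℂ) * (((Real.exp (-a):ℝ):ℂ) * z - ζ) = z - (E:ℂ) * ζ := by
        rw [Real.exp_neg, ← hE]
        have hE0 : (E:ℂ) ≠ 0 := by exact_mod_cast hEpos.ne'
        push_cast
        field_simp
      rw [← hfac, map_mul, Complex.abs_ofReal, abs_of_pos hEpos]
    rw [hmap]
    have : (p.roots.map (fun ζ => E * Complex.abs (((Real.exp (-a):ℝ):ℂ) * z - ζ))).prod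
        = (p.roots.map (fun _ => E)).prod * P1 := by
      rw [hP1, ← Multiset.prod_map_mul]
    rw [this, Multiset.map_const', Multiset.prod_replicate, card_roots_TT g b u hlc]
    have h2g : E ^ (2*g) = E^g * E^g := by rw [two_mul, pow_add]
    rw [h2g]
    rw [mul_assoc]
    rw [show E^g * P1 = (E^g)⁻¹ * P2 from habs2]
    field_simp
  have hroots0 : p.roots ≠ 0 := by
    intro h0
    have := card_roots_TT g b u hlc
    rw [h0] at this
    simp at this
    omega
  rcases lt_or_gt_of_ne (fun hc => hza hc) with hlt | hgt
  · -- abs z < 1 : each |E z - ζ| < |z - E ζ|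
    have hstrict : ∀ ζ ∈ p.roots, Complex.abs (((Real.exp a:ℝ):ℂ) * z - ζ) < Complex.abs (z - (E:ℂ) * ζ) := by
      intro ζ hζ
      have hdiff := factor_ineq (hcirc ζ hζ) hE1 (z := z)
      have hA : Complex.abs z ^ 2 < 1 := by nlinarith [Complex.abs.nonneg z]
      have hEsq : (1:ℝ) < E^2 := by nlinarith
      have hprod : 0 < (1 - Complex.abs z ^ 2) * (E^2 - 1) :=
        mul_pos (by linarith) (by linarith)
      have hsq : Complex.abs ((E:ℂ) * z - ζ)^2 < Complex.abs (z - (E:ℂ) * ζ)^2 := by nlinarith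
      have := lt_of_pow_lt_pow_left₀ 2 (Complex.abs.nonneg _) hsq
      simpa [hE] using this
    have := multiset_prod_lt hroots0 (fun ζ _ => Complex.abs.nonneg _) hstrict
    rw [hmain] at this
    exact lt_irrefl _ this
  · have hstrict : ∀ ζ ∈ p.roots, Complex.abs (z - (E:ℂ) * ζ) < Complex.abs (((Real.exp a:ℝ):ℂ) * z - ζ) := by
      intro ζ hζ
      have hdiff := factor_ineq (hcirc ζ hζ) hE1 (z := z)
      have hA : (1:ℝ) < Complex.abs z ^ 2 := by nlinarith
      have hEsq : (1:ℝ) < E^2 := by nlinarith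
      have hprod : 0 < (Complex.abs z ^ 2 - 1) * (E^2 - 1) :=
        mul_pos (by linarith) (by linarith)
      have hsq : Complex.abs (z - (E:ℂ) * ζ)^2 < Complex.abs ((E:ℂ) * z - ζ)^2 := by nlinarith
      have := lt_of_pow_lt_pow_left₀ 2 (Complex.abs.nonneg _) hsq
      simpa [hE] using this
    have := multiset_prod_lt hroots0 (fun ζ _ => Complex.abs.nonneg _) hstrict
    rw [hmain] at this
    exact lt_irrefl _ this

lemma multiset_pow_le_prod {s : Multiset ℂ} {f : ℂ → ℝ} {δ : ℝ} (hδ : 0 ≤ δ)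
    (hle : ∀ ζ ∈ s, δ ≤ f ζ) : δ ^ (Multiset.card s) ≤ (s.map f).prod := by
  induction s using Multiset.induction with
  | empty => simp
  | cons a s ih =>
    simp only [Multiset.map_cons, Multiset.prod_cons, Multiset.card_cons, pow_succ]
    rw [mul_comm (δ ^ Multiset.card s) δ]
    exact mul_le_mul (hle a (by simp)) (ih (fun ζ hζ => hle ζ (by simp [hζ])))
      (pow_nonneg hδ _) (le_trans hδ (hle a (by simp)))

lemma iterate_step (g : ℕ) (hg : 1 ≤ g) (b : ℕ → ℝ) (hb : b g ≠ 0) (u : ℕ → ℝ)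
    (hu : ∀ n, 0 < u n)
    (h : ∀ z : ℂ, eval z (TT g b u) = 0 → Complex.abs z = 1) (a : ℝ) (ha : 0 ≤ a) (m : ℕ) :
    ∀ z : ℂ, eval z (TT g b (fun n => u n * Real.cosh ((n:ℝ)*a) ^ m)) = 0 →
      Complex.abs z = 1 := by
  induction m with
  | zero => simpa [show (fun n => u n * Real.cosh ((n:ℝ)*a)^0) = u by funext n; simp] using h
  | succ m ih =>
    have hfun : (fun n => u n * Real.cosh ((n:ℝ)*a)^(m+1))
        = (fun n => (u n * Real.cosh ((n:ℝ)*a)^m) * Real.cosh ((n:ℝ)*a)) := by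
      funext n; ring
    rw [hfun]
    refine step g hg b _ ?_ a ha ih
    have h1 : 0 < u g * Real.cosh ((g:ℝ)*a)^m := mul_pos (hu g) (pow_pos (Real.cosh_pos _) m)
    exact mul_ne_zero hb h1.ne'

theorem TT_main (g : ℕ) (hg : 1 ≤ g) (b : ℕ → ℝ) (hb : b g ≠ 0) (t t' : ℝ) (htt' : t ≤ t')
    (h : ∀ z : ℂ, eval z (TT g b (fun n => Real.exp (t * (n:ℝ)^2))) = 0 → Complex.abs z = 1) :
    ∀ z : ℂ, eval z (TT g b (fun n => Real.exp (t' * (n:ℝ)^2))) = 0 → Complex.abs z = 1 := by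
  set s := t' - t with hs
  have hs0 : 0 ≤ s := by simp [hs]; linarith
  intro z hz
  by_contra hza
  set δ := |Complex.abs z - 1| with hδdef
  have hδ0 : 0 < δ := abs_pos.2 (sub_ne_zero.2 hza)
  set am : ℕ → ℝ := fun m => Real.sqrt (2*s) / Real.sqrt m with ham
  set um : ℕ → ℕ → ℝ := fun m n => Real.exp (t * (n:ℝ)^2) * Real.cosh ((n:ℝ)*(am m))^m
    with hum
  have humpos : ∀ m n, 0 < um m n := fun m n => by
    have := Real.cosh_pos ((n:ℝ)*(am m))
    positivity
  have hcirc : ∀ m, ∀ w : ℂ, eval w (TT g b (um m)) = 0 → Complex.abs w = 1 := fun m =>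
    iterate_step g hg b hb _ (fun n => Real.exp_pos _) h (am m) (div_nonneg (Real.sqrt_nonneg _) (Real.sqrt_nonneg _)) m
  have hlcm : ∀ m, b g * um m g ≠ 0 := fun m =>
    mul_ne_zero hb (humpos m g).ne'
  -- lower bound on |eval z (TT g b (um m))|
  set c0 := |b g| * Real.exp (t * (g:ℝ)^2) with hc0
  have hc0pos : 0 < c0 := by
    have : 0 < |b g| := abs_pos.2 hb
    positivity
  have hlower : ∀ m, c0 * δ^(2*g) ≤ Complex.abs (eval z (TT g b (um m))) := by
    intro m
    rw [abs_eval_eq]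
    have hroots1 : ∀ ζ ∈ (TT g b (um m)).roots, δ ≤ Complex.abs (z - ζ) := by
      intro ζ hζ
      have h1 : Complex.abs ζ = 1 :=
        hcirc m ζ ((mem_roots (TT_ne_zero g b (um m) (hlcm m))).1 hζ)
      calc δ = |Complex.abs z - Complex.abs ζ| := by rw [h1, hδdef]
        _ ≤ Complex.abs (z - ζ) := by
            simpa [Complex.abs_apply] using abs_norm_sub_norm_le z ζ
    have hprod : δ^(2*g) ≤ ((TT g b (um m)).roots.map (fun ζ => Complex.abs (z - ζ))).prod := by
      have := multiset_pow_le_prod hδ0.le hroots1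
      rwa [card_roots_TT g b (um m) (hlcm m)] at this
    have hLC : c0 ≤ Complex.abs (TT g b (um m)).leadingCoeff := by
      rw [leadingCoeff_TT g b (um m) (hlcm m), Complex.abs_ofReal, abs_mul, hum]
      have h1 : 1 ≤ Real.cosh ((g:ℝ)*(am m))^m :=
        one_le_pow₀ (Real.one_le_cosh _)
      have h2 : |Real.exp (t * (g:ℝ)^2) * Real.cosh ((g:ℝ)*(am m))^m|
          = Real.exp (t * (g:ℝ)^2) * Real.cosh ((g:ℝ)*(am m))^m := by
        refine abs_of_pos ?_
        have := Real.cosh_pos ((g:ℝ)*(am m))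
        positivity
      rw [hc0]
      calc |b g| * Real.exp (t * (g:ℝ)^2)
          ≤ |b g| * (Real.exp (t * (g:ℝ)^2) * Real.cosh ((g:ℝ)*(am m))^m) := by
            rw [← mul_one (Real.exp (t * (g:ℝ)^2))]
            refine mul_le_mul_of_nonneg_left ?_ (abs_nonneg _)
            rw [mul_one]
            nlinarith [Real.exp_pos (t * (g:ℝ)^2)]
        _ = |b g| * |Real.exp (t * (g:ℝ)^2) * Real.cosh ((g:ℝ)*(am m))^m| := by rw [h2]
    calc c0 * δ^(2*g) ≤ Complex.abs (TT g b (um m)).leadingCoeff * δ^(2*g) :=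
          mul_le_mul_of_nonneg_right hLC (by positivity)
      _ ≤ _ := mul_le_mul_of_nonneg_left hprod (Complex.abs.nonneg _)
  -- convergence to 0
  have htend : Filter.Tendsto (fun m => eval z (TT g b (um m))) Filter.atTop
      (𝓝 (eval z (TT g b (fun n => Real.exp (t' * (n:ℝ)^2))))) := by
    simp only [eval_TT]
    refine tendsto_finset_sum _ (fun k _ => ?_)
    have hcoef : Filter.Tendsto (fun m => (b (Nat.dist k g) * um m (Nat.dist k g) : ℝ))
        Filter.atTop (𝓝 (b (Nat.dist k g) * Real.exp (t' * ((Nat.dist k g : ℕ):ℝ)^2))) := by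
      have h1 := cosh_pow_tendsto s hs0 (Nat.dist k g)
      have h2 : Filter.Tendsto (fun m : ℕ => Real.exp (t * ((Nat.dist k g : ℕ):ℝ)^2)
          * Real.cosh (((Nat.dist k g : ℕ):ℝ)*(am m))^m) Filter.atTop
          (𝓝 (Real.exp (t * ((Nat.dist k g : ℕ):ℝ)^2) * Real.exp (s * ((Nat.dist k g : ℕ):ℝ)^2))) :=
        h1.const_mul _
      have h3 : Real.exp (t * ((Nat.dist k g : ℕ):ℝ)^2) * Real.exp (s * ((Nat.dist k g : ℕ):ℝ)^2)
          = Real.exp (t' * ((Nat.dist k g : ℕ):ℝ)^2) := by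
        rw [← Real.exp_add]
        congr 1
        rw [hs]
        ring
      rw [h3] at h2
      exact h2.const_mul _
    have hcast := (Complex.continuous_ofReal.tendsto _).comp hcoef
    exact hcast.mul_const _
  rw [hz] at htend
  have habs0 : Filter.Tendsto (fun m => Complex.abs (eval z (TT g b (um m)))) Filter.atTop
      (𝓝 0) := by
    have := (Complex.continuous_abs.tendsto 0).comp htend
    simpa [Function.comp_def] using this
  have hev : ∀ᶠ m in Filter.atTop,
      Complex.abs (eval z (TT g b (um m))) < c0 * δ^(2*g) := by
    have hpos : (0:ℝ) < c0 * δ^(2*g) := by positivity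
    exact habs0.eventually_lt_const hpos
  obtain ⟨m, hm⟩ := hev.exists
  exact absurd (hlower m) (not_le.2 hm)

lemma sum_range_symm (g : ℕ) (f : ℕ → ℂ) :
    ∑ k ∈ Finset.range (2*g+1), f k
      = f g + ∑ n ∈ Finset.Icc 1 g, (f (g+n) + f (g-n)) := by
  have hsplit : ∑ k ∈ Finset.range (2*g+1), f k
      = ∑ k ∈ Finset.range (g+1), f k + ∑ k ∈ Finset.Ico (g+1) (2*g+1), f k := by
    rw [Finset.range_eq_Ico, Finset.range_eq_Ico]
    exact (Finset.sum_Ico_consecutive f (Nat.zero_le _) (by omega : g + 1 ≤ 2*g+1)).symm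
  have hIcc : Finset.Icc 1 g = Finset.Ico 1 (g+1) := by rw [Finset.Ico_add_one_right_eq_Icc]
  have hB : ∑ k ∈ Finset.Ico (g+1) (2*g+1), f k = ∑ n ∈ Finset.Icc 1 g, f (g+n) := by
    rw [Finset.sum_Ico_eq_sum_range, hIcc, Finset.sum_Ico_eq_sum_range]
    refine Finset.sum_congr (by congr 1; omega) (fun i _ => by congr 1; omega)
  have hA : ∑ k ∈ Finset.range (g+1), f k = f g + ∑ n ∈ Finset.Icc 1 g, f (g-n) := by
    rw [← Finset.sum_range_reflect, Finset.sum_range_succ', hIcc, Finset.sum_Ico_eq_sum_range,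
      add_comm]
    exact congrArg₂ (· + ·) (congrArg f (by omega))
      (Finset.sum_congr (congrArg Finset.range (by omega)) (fun i _ => congrArg f (by omega)))
  rw [hsplit, hA, hB, Finset.sum_add_distrib]
  ring

lemma bridge' (g : ℕ) (c : ℕ → ℤ) (q t : ℝ) (x : ℂ) :
    eval (Complex.exp (Complex.I * x))
        (TT g (fun n => (c n : ℝ) * q ^ n) (fun n => Real.exp (t * (n:ℝ)^2)))
      = Complex.exp ((g:ℂ) * Complex.I * x) *
        ((c 0 : ℂ) + ∑ n ∈ Finset.Icc 1 g,
          (c n : ℂ) * ((q ^ n * Real.exp (t * (n:ℝ)^2) : ℝ) : ℂ) *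
          (Complex.exp (n * Complex.I * x) + Complex.exp (-(n * Complex.I * x)))) := by
  rw [eval_TT, sum_range_symm, mul_add, Finset.mul_sum]
  congr 1
  · have hd : Nat.dist g g = 0 := by
      rw [Nat.dist_eq_sub_of_le (le_refl g)]; omega
    rw [hd]
    rw [show Complex.exp (Complex.I*x)^g = Complex.exp ((g:ℂ) * Complex.I * x) by
      rw [← Complex.exp_nat_mul]; ring_nf]
    have hu0 : Real.exp (t * ((0:ℕ):ℝ)^2) = 1 := by norm_num
    rw [hu0]
    push_cast
    ring
  · refine Finset.sum_congr rfl (fun n hn => ?_)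
    obtain ⟨hn1, hn2⟩ := Finset.mem_Icc.mp hn
    have hd1 : Nat.dist (g+n) g = n := by
      rw [Nat.dist_eq_sub_of_le_right (by omega)]; omega
    have hd2 : Nat.dist (g-n) g = n := by
      rw [Nat.dist_eq_sub_of_le (by omega)]; omega
    rw [hd1, hd2]
    have hz1 : Complex.exp (Complex.I*x)^(g+n)
        = Complex.exp ((g:ℂ) * Complex.I * x) * Complex.exp ((n:ℂ) * Complex.I * x) := by
      rw [← Complex.exp_nat_mul, ← Complex.exp_add]; congr 1; push_cast; ring
    have hz2 : Complex.exp (Complex.I*x)^(g-n)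
        = Complex.exp ((g:ℂ) * Complex.I * x) * Complex.exp (-((n:ℂ) * Complex.I * x)) := by
      rw [← Complex.exp_nat_mul, ← Complex.exp_add]; congr 1
      push_cast [Nat.cast_sub hn2]
      ring
    rw [hz1, hz2]
    push_cast
    ring

lemma lCoeff_zero (F : Type) [Field F] [Fintype F] (D : F[X]) : lCoeff D 0 = 1 := by
  simp [lCoeff, chi, UniqueFactorizationMonoid.factors_one]

/-- For a good pair `(D, q)` and reals `t ≤ t′`: if every zero of
`Ξ_t(·, χ_D)` is real, then every zero of `Ξ_{t′}(·, χ_D)` is real. -/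
theorem stmt16 (F : Type) [Field F] [Fintype F] (D : F[X]) (hD : GoodPair D)
    (t t' : ℝ) (htt' : t ≤ t')
    (h : ∀ x : ℂ, Xi D t x = 0 → x.im = 0) :
    ∀ x : ℂ, Xi D t' x = 0 → x.im = 0 := by
  classical
  have hg1 : 1 ≤ (D.natDegree - 1)/2 := by
    obtain ⟨-, -, -, -, h3⟩ := hD
    omega
  set g := (D.natDegree - 1)/2 with hgdef
  set q : ℝ := Real.sqrt (Fintype.card F) with hqdef
  have hqpos : 0 < q := Real.sqrt_pos.2 (by exact_mod_cast Fintype.card_pos)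
  set c : ℕ → ℤ := fun n => lCoeff D (g - n) with hcdef
  set b : ℕ → ℝ := fun n => (c n : ℝ) * q ^ n with hbdef
  have hcg : c g = 1 := by
    rw [hcdef]
    simp only [Nat.sub_self]
    exact lCoeff_zero F D
  have hbg : b g ≠ 0 := by
    rw [hbdef]
    simp only [hcg]
    push_cast
    positivity
  have hXi : ∀ s : ℝ, ∀ x : ℂ,
      eval (Complex.exp (Complex.I*x)) (TT g b (fun n => Real.exp (s*(n:ℝ)^2)))
        = Complex.exp ((g:ℂ)*Complex.I*x) * Xi D s x := by
    intro s x
    rw [show (TT g b fun n => Real.exp (s*(n:ℝ)^2))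
      = TT g (fun n => ((c n : ℝ) * q ^ n)) (fun n => Real.exp (s*(n:ℝ)^2)) by rw [hbdef]]
    rw [bridge' g c q s x]
    congr 1
  have hcirc_t : ∀ z : ℂ, eval z (TT g b (fun n => Real.exp (t*(n:ℝ)^2))) = 0 →
      Complex.abs z = 1 := by
    intro z hz
    have hz0 : z ≠ 0 := by
      intro h0
      rw [h0, ← Polynomial.coeff_zero_eq_eval_zero, coeff_TT g b _ 0 (by omega)] at hz
      have hd : Nat.dist 0 g = g := by
        rw [Nat.dist_eq_sub_of_le (Nat.zero_le g)]; omega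
      rw [hd] at hz
      have hne : b g * Real.exp (t * (g:ℝ)^2) ≠ 0 := mul_ne_zero hbg (Real.exp_pos _).ne'
      exact hne (by exact_mod_cast hz)
    have hexp : Complex.exp (Complex.I * (-Complex.I * Complex.log z)) = z := by
      rw [show Complex.I * (-Complex.I * Complex.log z)
          = -(Complex.I*Complex.I) * Complex.log z by ring, Complex.I_mul_I]
      simpa using Complex.exp_log hz0
    have hXi0 : Xi D t (-Complex.I * Complex.log z) = 0 := by
      have hb2 := hXi t (-Complex.I * Complex.log z)
      rw [hexp, hz] at hb2
      exact (mul_eq_zero.mp hb2.symm).resolve_left (Complex.exp_ne_zero _)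
    have him := h _ hXi0
    have him2 : (-Complex.I * Complex.log z).im = -Real.log (Complex.abs z) := by
      simp [Complex.mul_im, Complex.log_re, Complex.abs_apply]
    rw [him2] at him
    have hlog : Real.log (Complex.abs z) = 0 := by linarith
    rcases Real.log_eq_zero.mp hlog with h1 | h1 | h1
    · exact absurd h1 ((map_ne_zero Complex.abs).mpr hz0)
    · exact h1
    · nlinarith [Complex.abs.nonneg z]
  have h2 := TT_main g hg1 b hbg t t' htt' hcirc_t
  intro x hx
  have h3 : eval (Complex.exp (Complex.I * x))
      (TT g b (fun n => Real.exp (t' * (n:ℝ)^2))) = 0 := by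
    rw [hXi t' x, hx, mul_zero]
  have h4 := h2 _ h3
  rw [Complex.abs_exp] at h4
  have h5 : (Complex.I * x).re = -x.im := by simp
  rw [h5] at h4
  have h6 : -x.im = 0 := by
    have h7 : Real.exp (-x.im) = Real.exp 0 := by rw [h4, Real.exp_zero]
    exact Real.exp_eq_exp.mp h7
  linarith
end
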